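/- For the maximally entangled state σ = Φ_d and the isotropic state ρ = (1−ε)Φ_d + (ε/(d²−1))(𝟙 − Φ_d) on ℂ^d ⊗ ℂ^d, one has (1/2)‖ρ−σ‖₁ = ε and S(A|B)_ρ − S(A|B)_σ = ε·log(d²−1) + h(ε). -/

import Mathlib

open Matrix BigOperators
open scoped Kronecker ComplexOrder

noncomputable def shannonEntropy {d : ℕ} (p : Fin d → ℝ) : ℝ := ∑ x, Real.negMulLog (p x)

noncomputable def binEnt (x : ℝ) : ℝ := Real.negMulLog x + Real.negMulLog (1 - x)

def IsProb {d : ℕ} (p : Fin d → ℝ) : Prop := (∀ x, 0 ≤ p x) ∧ ∑ x, p x = 1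

def IsDensity {n : Type*} [Fintype n] [DecidableEq n] (ρ : Matrix n n ℂ) : Prop :=
  ρ.PosSemidef ∧ ρ.trace = 1

noncomputable def traceNorm {n : Type*} [Fintype n] [DecidableEq n] (A : Matrix n n ℂ) : ℝ :=
  ∑ i, Real.sqrt ((Matrix.posSemidef_conjTranspose_mul_self A).1.eigenvalues i)

noncomputable def vnEntropy {n : Type*} [Fintype n] [DecidableEq n] (ρ : Matrix n n ℂ) : ℝ :=
  if h : ρ.IsHermitian then ∑ i, Real.negMulLog (h.eigenvalues i) else 0

noncomputable def ptraceA {a b : ℕ} (ρ : Matrix (Fin a × Fin b) (Fin a × Fin b) ℂ) : Matrix (Fin b) (Fin b) ℂ :=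
  Matrix.of fun j j' => ∑ i, ρ (i, j) (i, j')

noncomputable def ptraceB {a b : ℕ} (ρ : Matrix (Fin a × Fin b) (Fin a × Fin b) ℂ) : Matrix (Fin a) (Fin a) ℂ :=
  Matrix.of fun i i' => ∑ j, ρ (i, j) (i', j)

noncomputable def condEnt {a b : ℕ} (ρ : Matrix (Fin a × Fin b) (Fin a × Fin b) ℂ) : ℝ :=
  vnEntropy ρ - vnEntropy (ptraceA ρ)

noncomputable def posPart {n : Type*} [Fintype n] [DecidableEq n] (A : Matrix n n ℂ) : Matrix n n ℂ :=
  if h : A.IsHermitian then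
    (h.eigenvectorUnitary : Matrix n n ℂ) * Matrix.diagonal (fun i => ((max (h.eigenvalues i) 0 : ℝ) : ℂ)) *
      (h.eigenvectorUnitary : Matrix n n ℂ)ᴴ
  else 0

noncomputable def matLog {n : Type*} [Fintype n] [DecidableEq n] (A : Matrix n n ℂ) : Matrix n n ℂ :=
  if h : A.IsHermitian then
    (h.eigenvectorUnitary : Matrix n n ℂ) * Matrix.diagonal (fun i => (Real.log (h.eigenvalues i) : ℂ)) *
      (h.eigenvectorUnitary : Matrix n n ℂ)ᴴ
  else 0

noncomputable def relEnt {n : Type*} [Fintype n] [DecidableEq n] (ρ γ : Matrix n n ℂ) : ℝ :=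
  ((ρ * (matLog ρ - matLog γ)).trace).re

open Classical in
noncomputable def matSqrt {n : Type*} [Fintype n] [DecidableEq n] (A : Matrix n n ℂ) : Matrix n n ℂ :=
  if h : A.PosSemidef then
    h.1.eigenvectorUnitary.1 * Matrix.diagonal ((↑) ∘ Real.sqrt ∘ h.1.eigenvalues) *
      (star h.1.eigenvectorUnitary : Matrix n n ℂ)
  else 0

noncomputable def fidelity {n : Type*} [Fintype n] [DecidableEq n] (ρ σ : Matrix n n ℂ) : ℝ :=
  traceNorm (matSqrt ρ * matSqrt σ)

noncomputable def maxEig {n : Type*} [Fintype n] [DecidableEq n] (A : Matrix n n ℂ) : ℝ :=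
  if h : A.IsHermitian then ⨆ i, h.eigenvalues i else 0

noncomputable def outer {n : Type*} [Fintype n] (v : n → ℂ) : Matrix n n ℂ :=
  Matrix.vecMulVec v (star v)

section aux

open Polynomial

private lemma aux_charpoly_unitary_conj {n : Type*} [Fintype n] [DecidableEq n]
    (U : Matrix.unitaryGroup n ℂ) (B : Matrix n n ℂ) :
    ((U : Matrix n n ℂ) * B * (U : Matrix n n ℂ)ᴴ).charpoly = B.charpoly := by
  have hU : (U : Matrix n n ℂ) * (U : Matrix n n ℂ)ᴴ = 1 := by
    simpa [Matrix.star_eq_conjTranspose] using Matrix.mem_unitaryGroup_iff.mp U.2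
  have hU' : (U : Matrix n n ℂ)ᴴ * (U : Matrix n n ℂ) = 1 := by
    simpa [Matrix.star_eq_conjTranspose] using Matrix.mem_unitaryGroup_iff'.mp U.2
  set f : Matrix n n ℂ →+* Matrix n n ℂ[X] := (C : ℂ →+* ℂ[X]).mapMatrix with hf
  have key : charmatrix ((U : Matrix n n ℂ) * B * (U : Matrix n n ℂ)ᴴ)
      = f (U : Matrix n n ℂ) * charmatrix B * f ((U : Matrix n n ℂ)ᴴ) := by
    rw [charmatrix, charmatrix, mul_sub, sub_mul]
    congr 1
    · rw [← Matrix.scalar_commute (X : ℂ[X]) (Commute.all _) _]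
      rw [mul_assoc, ← _root_.map_mul, hU, _root_.map_one, mul_one]
    · rw [hf]; simp only [← _root_.map_mul]
  simp only [Matrix.charpoly]
  rw [key]
  calc (f (U : Matrix n n ℂ) * charmatrix B * f ((U : Matrix n n ℂ)ᴴ)).det
      = (f ((U : Matrix n n ℂ)ᴴ) * f (U : Matrix n n ℂ)).det * (charmatrix B).det := by
        rw [det_mul, det_mul, det_mul]; ring
    _ = (charmatrix B).det := by
        have h1 : f ((U : Matrix n n ℂ)ᴴ) * f (U : Matrix n n ℂ) = 1 := by
          rw [← _root_.map_mul, hU', _root_.map_one]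
        rw [h1, det_one, one_mul]

private lemma aux_charpoly_diag {n : Type*} [Fintype n] [DecidableEq n] (E : n → ℂ) :
    (Matrix.diagonal E).charpoly = ∏ i, (X - C (E i)) := by
  simp only [Matrix.charpoly]
  have : charmatrix (Matrix.diagonal E) = Matrix.diagonal (fun i => X - C (E i)) := by
    ext i j
    by_cases h : i = j <;> simp [h, charmatrix_apply, Matrix.diagonal_apply]
  rw [this, det_diagonal]

private lemma aux_eig_sum_eq {n : Type*} [Fintype n] [DecidableEq n] {A : Matrix n n ℂ}
    (hA : A.IsHermitian) (U : Matrix.unitaryGroup n ℂ) (E : n → ℝ)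
    (hAE : A = (U : Matrix n n ℂ) * Matrix.diagonal (fun i => (E i : ℂ)) * (U : Matrix n n ℂ)ᴴ)
    (f : ℝ → ℝ) : ∑ i, f (hA.eigenvalues i) = ∑ i, f (E i) := by
  have h1 : A.charpoly = ∏ i, (X - C ((E i : ℂ))) := by
    rw [hAE, aux_charpoly_unitary_conj, aux_charpoly_diag]
  have h2 : A.charpoly = ∏ i, (X - C ((hA.eigenvalues i : ℂ))) := by
    conv_lhs => rw [hA.spectral_theorem, Unitary.conjStarAlgAut_apply]
    rw [show (star (hA.eigenvectorUnitary : Matrix n n ℂ)) = (hA.eigenvectorUnitary : Matrix n n ℂ)ᴴ from rfl,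
      aux_charpoly_unitary_conj, aux_charpoly_diag]
    rfl
  have r1 := Polynomial.roots_multiset_prod_X_sub_C
    (Finset.univ.val.map fun i => ((hA.eigenvalues i : ℂ)))
  have r2 := Polynomial.roots_multiset_prod_X_sub_C
    (Finset.univ.val.map fun i => ((E i : ℂ)))
  rw [Multiset.map_map] at r1 r2
  have e1 : (∏ i, (X - C ((hA.eigenvalues i : ℂ)))) =
      ((Finset.univ.val.map fun i => ((hA.eigenvalues i : ℂ))).map fun a => X - C a).prod := by
    rw [Multiset.map_map]; rfl
  have e2 : (∏ i, (X - C ((E i : ℂ)))) =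
      ((Finset.univ.val.map fun i => ((E i : ℂ))).map fun a => X - C a).prod := by
    rw [Multiset.map_map]; rfl
  rw [Multiset.map_map] at e1 e2
  have hroots : (Finset.univ.val.map fun i => ((hA.eigenvalues i : ℂ)))
      = Finset.univ.val.map fun i => ((E i : ℂ)) := by
    rw [← r1, ← r2, ← e1, ← e2, ← h1, ← h2]
  have key : ∀ g : n → ℝ, ∑ i, f (g i)
      = ((Finset.univ.val.map fun i => ((g i : ℂ))).map fun z => f z.re).sum := by
    intro g
    rw [Multiset.map_map]
    show (Finset.univ.val.map fun i => f (g i)).sum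
      = (Finset.univ.val.map ((fun z : ℂ => f z.re) ∘ fun i => ((g i : ℂ)))).sum
    have he : (fun i => f (g i)) = ((fun z : ℂ => f z.re) ∘ fun i => ((g i : ℂ))) := by
      funext i; simp
    rw [he]
  rw [key hA.eigenvalues, key E, hroots]

private lemma aux_UDU_herm {n : Type*} [Fintype n] [DecidableEq n]
    (U : Matrix.unitaryGroup n ℂ) (E : n → ℝ) :
    ((U : Matrix n n ℂ) * Matrix.diagonal (fun i => (E i : ℂ)) * (U : Matrix n n ℂ)ᴴ).IsHermitian := by
  unfold Matrix.IsHermitian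
  rw [conjTranspose_mul, conjTranspose_mul, conjTranspose_conjTranspose, diagonal_conjTranspose]
  have : star (fun i => ((E i : ℝ) : ℂ)) = fun i => ((E i : ℝ) : ℂ) := by
    funext i; simp [Pi.star_apply, Complex.conj_ofReal]
  rw [this, mul_assoc]

private lemma aux_UDU_mul {n : Type*} [Fintype n] [DecidableEq n]
    (U : Matrix.unitaryGroup n ℂ) (E F : n → ℂ) :
    ((U : Matrix n n ℂ) * Matrix.diagonal E * (U : Matrix n n ℂ)ᴴ) *
    ((U : Matrix n n ℂ) * Matrix.diagonal F * (U : Matrix n n ℂ)ᴴ) =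
    (U : Matrix n n ℂ) * Matrix.diagonal (fun i => E i * F i) * (U : Matrix n n ℂ)ᴴ := by
  have hU' : (U : Matrix n n ℂ)ᴴ * (U : Matrix n n ℂ) = 1 := by
    simpa [Matrix.star_eq_conjTranspose] using Matrix.mem_unitaryGroup_iff'.mp U.2
  calc ((U : Matrix n n ℂ) * Matrix.diagonal E * (U : Matrix n n ℂ)ᴴ) *
      ((U : Matrix n n ℂ) * Matrix.diagonal F * (U : Matrix n n ℂ)ᴴ)
      = (U : Matrix n n ℂ) * Matrix.diagonal E * ((U : Matrix n n ℂ)ᴴ * (U : Matrix n n ℂ)) *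
        Matrix.diagonal F * (U : Matrix n n ℂ)ᴴ := by noncomm_ring
    _ = (U : Matrix n n ℂ) * (Matrix.diagonal E * Matrix.diagonal F) * (U : Matrix n n ℂ)ᴴ := by
        rw [hU']; noncomm_ring
    _ = _ := by rw [diagonal_mul_diagonal]

private lemma aux_UDU_trace {n : Type*} [Fintype n] [DecidableEq n]
    (U : Matrix.unitaryGroup n ℂ) (E : n → ℂ) :
    ((U : Matrix n n ℂ) * Matrix.diagonal E * (U : Matrix n n ℂ)ᴴ).trace = ∑ i, E i := by
  have hU' : (U : Matrix n n ℂ)ᴴ * (U : Matrix n n ℂ) = 1 := by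
    simpa [Matrix.star_eq_conjTranspose] using Matrix.mem_unitaryGroup_iff'.mp U.2
  rw [Matrix.trace_mul_cycle, hU', one_mul, trace_diagonal]

private lemma aux_UDU_inj {n : Type*} [Fintype n] [DecidableEq n]
    (U : Matrix.unitaryGroup n ℂ) {X Y : Matrix n n ℂ}
    (h : (U : Matrix n n ℂ) * X * (U : Matrix n n ℂ)ᴴ = (U : Matrix n n ℂ) * Y * (U : Matrix n n ℂ)ᴴ) :
    X = Y := by
  have hU' : (U : Matrix n n ℂ)ᴴ * (U : Matrix n n ℂ) = 1 := by
    simpa [Matrix.star_eq_conjTranspose] using Matrix.mem_unitaryGroup_iff'.mp U.2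
  have := congrArg (fun M => (U : Matrix n n ℂ)ᴴ * M * (U : Matrix n n ℂ)) h
  simpa [← mul_assoc, hU', mul_assoc, Matrix.mul_assoc] using by
    calc X = ((U : Matrix n n ℂ)ᴴ * (U : Matrix n n ℂ)) * X *
          ((U : Matrix n n ℂ)ᴴ * (U : Matrix n n ℂ)) := by rw [hU']; simp
      _ = (U : Matrix n n ℂ)ᴴ * ((U : Matrix n n ℂ) * X * (U : Matrix n n ℂ)ᴴ) *
          (U : Matrix n n ℂ) := by noncomm_ring
      _ = (U : Matrix n n ℂ)ᴴ * ((U : Matrix n n ℂ) * Y * (U : Matrix n n ℂ)ᴴ) *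
          (U : Matrix n n ℂ) := by rw [h]
      _ = ((U : Matrix n n ℂ)ᴴ * (U : Matrix n n ℂ)) * Y *
          ((U : Matrix n n ℂ)ᴴ * (U : Matrix n n ℂ)) := by noncomm_ring
      _ = Y := by rw [hU']; simp

end aux

theorem stmt_10 {d : ℕ} (hd : 2 ≤ d) (ε : ℝ) (hε0 : 0 ≤ ε) (hε1 : ε ≤ 1 - 1 / (d : ℝ)^2)
    (Φ : Matrix (Fin d × Fin d) (Fin d × Fin d) ℂ)
    (hΦ : Φ = Matrix.of fun z w =>
      if z.1 = z.2 ∧ w.1 = w.2 then (1 / (d : ℂ)) else 0)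
    (ρ : Matrix (Fin d × Fin d) (Fin d × Fin d) ℂ)
    (hρ : ρ = (1 - ε) • Φ + (ε / ((d : ℝ)^2 - 1)) • ((1 : Matrix (Fin d × Fin d) (Fin d × Fin d) ℂ) - Φ)) :
    (1/2) * traceNorm (ρ - Φ) = ε ∧
    condEnt ρ - condEnt Φ = ε * Real.log ((d : ℝ)^2 - 1) + binEnt ε := by
  have hdR : (2:ℝ) ≤ (d:ℝ) := by exact_mod_cast hd
  have hdC : (d : ℂ) ≠ 0 := by simp only [ne_eq, Nat.cast_eq_zero]; omega
  have hd1pos : (0:ℝ) < (d:ℝ)^2 - 1 := by nlinarith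
  have hd1 : ((d:ℝ)^2 - 1) ≠ 0 := ne_of_gt hd1pos
  set c : ℝ := ε / ((d:ℝ)^2 - 1) with hc
  have hc0 : 0 ≤ c := div_nonneg hε0 (le_of_lt hd1pos)
  have hcd : c * ((d:ℝ)^2 - 1) = ε := div_mul_cancel₀ ε hd1
  -- basic facts about Φ
  have hΦH : Φ.IsHermitian := by
    unfold Matrix.IsHermitian
    ext z w
    simp only [hΦ, conjTranspose_apply, of_apply]
    split_ifs with h1 h2 h2 <;> simp_all [and_comm]
  have hΦ2 : Φ * Φ = Φ := by
    ext z w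
    simp only [hΦ, Matrix.mul_apply, of_apply, Fintype.sum_prod_type]
    by_cases h1 : z.1 = z.2 <;> by_cases h2 : w.1 = w.2 <;>
      simp [h1, h2, ite_and, Finset.sum_ite_eq, Finset.mul_sum, div_mul_div_comm, hdC]
  have htrΦ : Φ.trace = 1 := by
    simp only [hΦ, Matrix.trace, Matrix.diag, of_apply, Fintype.sum_prod_type]
    simp [Finset.sum_ite_eq, hdC, Finset.card_univ]
  -- spectral decomposition of Φ
  set U := hΦH.eigenvectorUnitary with hU
  set D : Fin d × Fin d → ℝ := hΦH.eigenvalues with hD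
  have hspec : Φ = (U : Matrix (Fin d × Fin d) (Fin d × Fin d) ℂ) *
      Matrix.diagonal (fun i => (D i : ℂ)) * (U : Matrix (Fin d × Fin d) (Fin d × Fin d) ℂ)ᴴ := by
    have hst := hΦH.spectral_theorem
    rw [Unitary.conjStarAlgAut_apply] at hst
    exact hst
  have hD01 : ∀ i, D i = 0 ∨ D i = 1 := by
    intro i
    have h2 := hΦ2
    rw [hspec, aux_UDU_mul] at h2
    have h3 := aux_UDU_inj U h2
    have h4 : ((D i : ℂ)) * (D i : ℂ) = (D i : ℂ) := by
      have := congrFun (congrFun h3 i) i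
      simpa [Matrix.diagonal_apply] using this
    have h5 : D i * D i = D i := by exact_mod_cast h4
    have h6 : D i * (D i - 1) = 0 := by ring_nf; linarith
    rcases mul_eq_zero.mp h6 with h | h
    · left; exact h
    · right; linarith
  have hDsum : ∑ i, D i = 1 := by
    have h1 : Φ.trace = ∑ i, ((D i : ℂ)) := by rw [hspec, aux_UDU_trace]
    rw [htrΦ] at h1
    have : ((∑ i, D i : ℝ) : ℂ) = 1 := by push_cast; rw [← h1]
    exact_mod_cast this
  -- diagonalization of ρ and ρ - Φ
  have hUmul : ∀ (X Y : Matrix (Fin d × Fin d) (Fin d × Fin d) ℂ) (r s : ℝ),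
      (U : Matrix (Fin d × Fin d) (Fin d × Fin d) ℂ) * (r • X + s • Y) *
        (U : Matrix (Fin d × Fin d) (Fin d × Fin d) ℂ)ᴴ
      = r • ((U : Matrix (Fin d × Fin d) (Fin d × Fin d) ℂ) * X *
          (U : Matrix (Fin d × Fin d) (Fin d × Fin d) ℂ)ᴴ)
        + s • ((U : Matrix (Fin d × Fin d) (Fin d × Fin d) ℂ) * Y *
          (U : Matrix (Fin d × Fin d) (Fin d × Fin d) ℂ)ᴴ) := by
    intro X Y r s
    rw [Matrix.mul_add, Matrix.add_mul, Matrix.mul_smul, Matrix.smul_mul, Matrix.mul_smul,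
      Matrix.smul_mul]
  have hUone : (U : Matrix (Fin d × Fin d) (Fin d × Fin d) ℂ) *
      (1 : Matrix (Fin d × Fin d) (Fin d × Fin d) ℂ) *
      (U : Matrix (Fin d × Fin d) (Fin d × Fin d) ℂ)ᴴ = 1 := by
    rw [mul_one]
    simpa [Matrix.star_eq_conjTranspose] using Matrix.mem_unitaryGroup_iff.mp U.2
  set Eρ : Fin d × Fin d → ℝ := fun i => (1 - ε) * D i + c * (1 - D i) with hEρ
  set F : Fin d × Fin d → ℝ := fun i => c * (1 - D i) - ε * D i with hF
  have hρdiag : ρ = (U : Matrix (Fin d × Fin d) (Fin d × Fin d) ℂ) *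
      Matrix.diagonal (fun i => (Eρ i : ℂ)) * (U : Matrix (Fin d × Fin d) (Fin d × Fin d) ℂ)ᴴ := by
    have hdd : Matrix.diagonal (fun i => ((Eρ i : ℝ) : ℂ))
        = (1 - ε) • Matrix.diagonal (fun i => ((D i : ℝ) : ℂ))
          + c • ((1 : Matrix (Fin d × Fin d) (Fin d × Fin d) ℂ)
            - Matrix.diagonal (fun i => ((D i : ℝ) : ℂ))) := by
      ext i j
      by_cases h : i = j
      · subst h
        simp only [Matrix.diagonal_apply_eq, Matrix.add_apply, Matrix.smul_apply,
          Matrix.sub_apply, Matrix.one_apply_eq, Complex.real_smul, hEρ]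
        push_cast
        ring
      · simp [Matrix.diagonal_apply_ne _ h, Matrix.one_apply_ne h]
    rw [hρ, hdd, hUmul, Matrix.mul_sub, Matrix.sub_mul, hUone, ← hspec]
  have hAdiag : ρ - Φ = (U : Matrix (Fin d × Fin d) (Fin d × Fin d) ℂ) *
      Matrix.diagonal (fun i => (F i : ℂ)) * (U : Matrix (Fin d × Fin d) (Fin d × Fin d) ℂ)ᴴ := by
    have hdd : Matrix.diagonal (fun i => ((F i : ℝ) : ℂ))
        = Matrix.diagonal (fun i => ((Eρ i : ℝ) : ℂ))
          - Matrix.diagonal (fun i => ((D i : ℝ) : ℂ)) := by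
      ext i j
      by_cases h : i = j
      · subst h
        simp only [Matrix.diagonal_apply_eq, Matrix.sub_apply, hEρ, hF]
        push_cast
        ring
      · simp [Matrix.diagonal_apply_ne _ h]
    rw [hρdiag]
    conv_lhs => rw [hspec]
    rw [hdd, Matrix.mul_sub, Matrix.sub_mul]
  -- part 1 : trace norm
  have part1 : (1/2) * traceNorm (ρ - Φ) = ε := by
    have hAH : (ρ - Φ).IsHermitian := hAdiag ▸ aux_UDU_herm U F
    have hAA : (ρ - Φ)ᴴ * (ρ - Φ) = (U : Matrix (Fin d × Fin d) (Fin d × Fin d) ℂ) *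
        Matrix.diagonal (fun i => ((F i * F i : ℝ) : ℂ)) *
        (U : Matrix (Fin d × Fin d) (Fin d × Fin d) ℂ)ᴴ := by
      rw [hAH.eq]
      conv_lhs => rw [hAdiag]
      rw [aux_UDU_mul]
      congr 1
      · congr 1
        funext i
        push_cast
        ring
    have hsum := aux_eig_sum_eq (Matrix.posSemidef_conjTranspose_mul_self (ρ - Φ)).1 U
      (fun i => F i * F i) hAA Real.sqrt
    rw [traceNorm, hsum]
    have habs : ∀ i, Real.sqrt (F i * F i) = ε * D i + c * (1 - D i) := by
      intro i
      rw [Real.sqrt_mul_self_eq_abs]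
      rcases hD01 i with h | h
      · simp [hF, h, abs_of_nonneg hc0]
      · simp [hF, h, abs_of_nonneg hε0]
    rw [Finset.sum_congr rfl (fun i _ => habs i)]
    rw [Finset.sum_add_distrib, ← Finset.mul_sum, ← Finset.mul_sum, hDsum,
      Finset.sum_sub_distrib, hDsum]
    have hcard : ∑ _i : Fin d × Fin d, (1:ℝ) = (d:ℝ)^2 := by
      simp [Finset.card_univ]
      push_cast
      ring
    rw [hcard, mul_one]
    have : c * ((d:ℝ)^2 - 1) = ε := hcd
    linarith
  refine ⟨part1, ?_⟩
  -- part 2 : conditional entropies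
  have hptrace : ptraceA ρ = ptraceA Φ := by
    ext j j'
    simp only [ptraceA, of_apply, hρ, Matrix.add_apply, Matrix.smul_apply, Matrix.sub_apply,
      Matrix.one_apply, hΦ]
    by_cases h : j = j'
    · subst h
      simp only [Prod.mk.injEq, true_and, and_true]
      simp [Finset.sum_ite_eq, Complex.real_smul, Finset.mul_sum, Finset.sum_ite_eq',
        Finset.card_univ]
      have hcdC : ((c:ℝ) : ℂ) * ((d:ℂ)^2 - 1) = ((ε:ℝ) : ℂ) := by exact_mod_cast hcd
      have e1 : ∑ x : Fin d, (((c:ℝ) : ℂ) * (1 - if x = j then ((d:ℂ))⁻¹ else 0))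
          = ((c:ℝ) : ℂ) * ((d:ℂ) - ((d:ℂ))⁻¹) := by
        rw [← Finset.mul_sum]
        congr 1
        rw [Finset.sum_sub_distrib]
        simp [Finset.sum_ite_eq', Finset.card_univ]
      rw [Finset.sum_add_distrib, e1]
      have e2 : ∑ x : Fin d, (if x = j then (1 - (ε:ℂ)) * ((d:ℂ))⁻¹ else 0)
          = (1 - (ε:ℂ)) * ((d:ℂ))⁻¹ := by
        simp [Finset.sum_ite_eq']
      rw [e2]
      field_simp
      linear_combination hcdC
    · have hne : ∀ x : Fin d, ¬(x = j ∧ x = j') := by rintro x ⟨rfl, rfl⟩; exact h rfl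
      simp [h, Prod.ext_iff, Complex.real_smul, hne]
  have hρH : ρ.IsHermitian := hρdiag ▸ aux_UDU_herm U Eρ
  have hSρ : vnEntropy ρ = Real.negMulLog (1 - ε) + ((d:ℝ)^2 - 1) * Real.negMulLog c := by
    rw [vnEntropy, dif_pos hρH, aux_eig_sum_eq hρH U Eρ hρdiag Real.negMulLog]
    have hterm : ∀ i, Real.negMulLog (Eρ i)
        = D i * Real.negMulLog (1 - ε) + (1 - D i) * Real.negMulLog c := by
      intro i
      rcases hD01 i with h | h <;> simp [hEρ, h]
    rw [Finset.sum_congr rfl (fun i _ => hterm i), Finset.sum_add_distrib,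
      ← Finset.sum_mul, ← Finset.sum_mul, hDsum, Finset.sum_sub_distrib, hDsum]
    have hcard : ∑ _i : Fin d × Fin d, (1:ℝ) = (d:ℝ)^2 := by
      simp [Finset.card_univ]
      push_cast
      ring
    rw [hcard, one_mul]
  have hSΦ : vnEntropy Φ = 0 := by
    rw [vnEntropy, dif_pos hΦH]
    apply Finset.sum_eq_zero
    intro i _
    rcases hD01 i with h | h <;>
      simp only [show hΦH.eigenvalues = D from rfl, h, Real.negMulLog_zero, Real.negMulLog_one]
  rw [condEnt, condEnt, hptrace, hSρ, hSΦ]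
  rw [binEnt]
  have hkey : ((d:ℝ)^2 - 1) * Real.negMulLog c = ε * Real.log ((d:ℝ)^2 - 1) + Real.negMulLog ε := by
    rcases eq_or_lt_of_le hε0 with h | h
    · rw [hc, ← h]
      simp [Real.negMulLog_zero]
    · rw [hc, Real.negMulLog, Real.negMulLog, Real.log_div (ne_of_gt h) hd1]
      field_simp
      ring
  linarith [hkey]
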